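/- For every positive integer ℓ there exists an ℓ-step martingale p_0, ..., p_ℓ of probability vectors on a set X with 2^ℓ elements, starting at the uniform distribution, such that ||p_t - p_{t-1}||_1 = 1 almost surely for each t, hence the total variation E Σ_{t=1}^ℓ ||p_t - p_{t-1}||_1 = ℓ. -/

import Mathlib

open MeasureTheory Real ENNReal


namespace Stmt17Aux

/-- agreement on the first `m` coordinates -/
def agr (ℓ m : ℕ) (ω b : Fin ℓ → Bool) : Prop := ∀ i : Fin ℓ, (i : ℕ) < m → ω i = b i

instance (ℓ m : ℕ) (ω b : Fin ℓ → Bool) : Decidable (agr ℓ m ω b) := by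
  unfold agr; infer_instance

lemma agr_mono {ℓ m m' : ℕ} (h : m' ≤ m) {ω b : Fin ℓ → Bool} (ha : agr ℓ m ω b) :
    agr ℓ m' ω b := fun i hi => ha i (lt_of_lt_of_le hi h)

lemma agr_comm {ℓ m : ℕ} {ω b : Fin ℓ → Bool} : agr ℓ m ω b ↔ agr ℓ m b ω := by
  unfold agr
  constructor <;> intro h i hi <;> exact (h i hi).symm

lemma card_filter_lt (ℓ m : ℕ) (hm : m ≤ ℓ) :
    (Finset.univ.filter (fun i : Fin ℓ => (i : ℕ) < m)).card = m := by
  classical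
  rw [← Finset.card_image_of_injective _ Fin.val_injective]
  have : (Finset.univ.filter (fun i : Fin ℓ => (i : ℕ) < m)).image Fin.val
      = Finset.range m := by
    ext n
    simp only [Finset.mem_image, Finset.mem_filter, Finset.mem_univ, true_and,
      Finset.mem_range]
    constructor
    · rintro ⟨i, hi, rfl⟩; exact hi
    · intro hn; exact ⟨⟨n, lt_of_lt_of_le hn hm⟩, hn, rfl⟩
  rw [this, Finset.card_range]

lemma card_filter_agr (ℓ m : ℕ) (hm : m ≤ ℓ) (b : Fin ℓ → Bool) :
    (Finset.univ.filter (fun ω => agr ℓ m ω b)).card = 2 ^ (ℓ - m) := by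
  classical
  have h1 : Finset.univ.filter (fun ω => agr ℓ m ω b)
      = Fintype.piFinset (fun i : Fin ℓ => if (i : ℕ) < m then {b i} else Finset.univ) := by
    ext ω
    simp only [Finset.mem_filter, Finset.mem_univ, true_and, Fintype.mem_piFinset]
    constructor
    · intro h i
      by_cases hi : (i : ℕ) < m
      · simp [hi, h i hi]
      · simp [hi]
    · intro h i hi
      have := h i
      simpa [hi] using this
  rw [h1, Fintype.card_piFinset]
  have h2 : ∀ i : Fin ℓ, (if (i : ℕ) < m then ({b i} : Finset Bool) else Finset.univ).card
      = if (i : ℕ) < m then 1 else 2 := by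
    intro i; split <;> simp
  rw [Finset.prod_congr rfl (fun i _ => h2 i), Finset.prod_ite]
  simp only [Finset.prod_const, one_pow, one_mul]
  congr 1
  have h3 := card_filter_lt ℓ m hm
  have hsplit := Finset.card_filter_add_card_filter_not
    (s := (Finset.univ : Finset (Fin ℓ))) (p := fun i : Fin ℓ => (i : ℕ) < m)
  rw [Finset.card_univ, Fintype.card_fin, h3] at hsplit
  omega

lemma sum_ite_agr (ℓ m : ℕ) (hm : m ≤ ℓ) (b : Fin ℓ → Bool) (c : ℝ) :
    ∑ ω : Fin ℓ → Bool, (if agr ℓ m ω b then c else 0) = 2 ^ (ℓ - m) * c := by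
  classical
  rw [Finset.sum_ite, Finset.sum_const, Finset.sum_const, card_filter_agr ℓ m hm b]
  simp [mul_comm]

def trunc (ℓ t : ℕ) (ω : Fin ℓ → Bool) : Fin ℓ → Bool :=
  fun i => if (i : ℕ) < t then ω i else false

lemma trunc_trunc (ℓ s t : ℕ) (hst : s ≤ t) (ω : Fin ℓ → Bool) :
    trunc ℓ s (trunc ℓ t ω) = trunc ℓ s ω := by
  funext i
  simp only [trunc]
  by_cases hi : (i : ℕ) < s
  · simp [hi, lt_of_lt_of_le hi hst]
  · simp [hi]

lemma agr_trunc (ℓ m t : ℕ) (hmt : m ≤ t) (ω b : Fin ℓ → Bool) :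
    agr ℓ m (trunc ℓ t ω) b ↔ agr ℓ m ω b := by
  unfold agr trunc
  constructor <;> intro h i hi <;> have := h i hi <;>
    simpa [lt_of_lt_of_le hi hmt] using this

lemma trunc_eq_of_agr {ℓ m i : ℕ} (him : i ≤ m) {ω b : Fin ℓ → Bool}
    (h : agr ℓ m ω b) : trunc ℓ i ω = trunc ℓ i b := by
  funext k
  simp only [trunc]
  by_cases hk : (k : ℕ) < i
  · simp [hk, h k (lt_of_lt_of_le hk him)]
  · simp [hk]

lemma sum_trunc_agr (ℓ i m : ℕ) (him : i ≤ m) (hm : m ≤ ℓ)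
    (g : (Fin ℓ → Bool) → ℝ) (b : Fin ℓ → Bool) (c : ℝ) :
    ∑ ω : Fin ℓ → Bool, g (trunc ℓ i ω) * (if agr ℓ m ω b then c else 0)
      = 2 ^ (ℓ - m) * c * g (trunc ℓ i b) := by
  classical
  have h1 : ∀ ω : Fin ℓ → Bool,
      g (trunc ℓ i ω) * (if agr ℓ m ω b then c else 0)
        = if agr ℓ m ω b then g (trunc ℓ i b) * c else 0 := by
    intro ω
    by_cases h : agr ℓ m ω b
    · simp [h, trunc_eq_of_agr him h]
    · simp [h]
  rw [Finset.sum_congr rfl (fun ω _ => h1 ω), sum_ite_agr ℓ m hm b]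
  ring

lemma inst_eq_top (ℓ : ℕ) : (inferInstance : MeasurableSpace (Fin ℓ → Bool)) = ⊤ :=
  eq_top_iff.mpr (fun s _ => MeasurableSet.of_discrete)

/-- the filtration generated by the first `t` coordinates -/
def filt (ℓ : ℕ) : Filtration ℕ (inferInstance : MeasurableSpace (Fin ℓ → Bool)) where
  seq t := MeasurableSpace.comap (trunc ℓ t) ⊤
  mono' := by
    intro s t hst
    show MeasurableSpace.comap (trunc ℓ s) ⊤ ≤ MeasurableSpace.comap (trunc ℓ t) ⊤
    have h : trunc ℓ s = trunc ℓ s ∘ trunc ℓ t := by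
      funext ω; exact (trunc_trunc ℓ s t hst ω).symm
    rw [h, ← MeasurableSpace.comap_comp]
    exact MeasurableSpace.comap_mono le_top
  le' := by
    intro t
    rw [inst_eq_top ℓ]
    exact le_top

lemma measurable_filt {ℓ t : ℕ} (g : (Fin ℓ → Bool) → ℝ) :
    Measurable[filt ℓ t] (fun ω => g (trunc ℓ t ω)) := by
  intro s _
  exact ⟨g ⁻¹' s, trivial, rfl⟩

noncomputable def meas (ℓ : ℕ) : Measure (Fin ℓ → Bool) :=
  ((2 : ℝ≥0∞) ^ ℓ)⁻¹ • Measure.count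

lemma meas_singleton (ℓ : ℕ) (ω : Fin ℓ → Bool) :
    meas ℓ {ω} = ((2 : ℝ≥0∞) ^ ℓ)⁻¹ := by
  rw [meas, Measure.smul_apply, Measure.count_singleton, smul_eq_mul, mul_one]

instance isProb (ℓ : ℕ) : IsProbabilityMeasure (meas ℓ) := by
  constructor
  rw [meas, Measure.smul_apply, Measure.count_apply_finite _ (Set.finite_univ)]
  simp only [smul_eq_mul]
  have hcard : (Set.univ : Set (Fin ℓ → Bool)).toFinite.toFinset.card = 2 ^ ℓ := by
    simp [Set.toFinite_toFinset, Set.toFinset_univ, Fintype.card_fun]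
  rw [hcard]
  push_cast
  rw [ENNReal.inv_mul_cancel (by positivity) (by simp)]

lemma integral_meas (ℓ : ℕ) (g : (Fin ℓ → Bool) → ℝ) :
    ∫ ω, g ω ∂(meas ℓ) = ∑ ω, ((2 : ℝ) ^ ℓ)⁻¹ * g ω := by
  rw [integral_fintype (Integrable.of_finite)]
  refine Finset.sum_congr rfl (fun ω _ => ?_)
  rw [Measure.real_def, meas_singleton]
  simp [ENNReal.toReal_inv, smul_eq_mul]

lemma setIntegral_meas (ℓ : ℕ) (s : Set (Fin ℓ → Bool)) (g : (Fin ℓ → Bool) → ℝ) :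
    ∫ ω in s, g ω ∂(meas ℓ) = ∑ ω, ((2 : ℝ) ^ ℓ)⁻¹ * (s.indicator g ω) := by
  rw [← integral_indicator (MeasurableSet.of_discrete), integral_meas]

noncomputable def eqv (ℓ : ℕ) : (Fin ℓ → Bool) ≃ Fin (2 ^ ℓ) :=
  Fintype.equivFinOfCardEq (by simp [Fintype.card_fun])

/-- the martingale -/
noncomputable def mart (ℓ t : ℕ) (ω : Fin ℓ → Bool) (x : Fin (2 ^ ℓ)) : ℝ :=
  if agr ℓ (min t ℓ) ω ((eqv ℓ).symm x) then 2 ^ (min t ℓ) / 2 ^ ℓ else 0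

lemma pow_cancel {ℓ m : ℕ} (hm : m ≤ ℓ) :
    (2 : ℝ) ^ (ℓ - m) * ((2 : ℝ) ^ m / 2 ^ ℓ) = 1 := by
  have h : (2 : ℝ) ^ (ℓ - m) * (2 : ℝ) ^ m = 2 ^ ℓ := by
    rw [← pow_add]; congr 1; omega
  field_simp
  linarith [h]

lemma mart_nonneg (ℓ t : ℕ) (ω : Fin ℓ → Bool) (x : Fin (2 ^ ℓ)) :
    0 ≤ mart ℓ t ω x := by
  unfold mart; split <;> positivity

lemma mart_sum (ℓ t : ℕ) (ω : Fin ℓ → Bool) : ∑ x, mart ℓ t ω x = 1 := by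
  classical
  unfold mart
  rw [Equiv.sum_comp (eqv ℓ).symm
    (fun b => if agr ℓ (min t ℓ) ω b then (2:ℝ) ^ (min t ℓ) / 2 ^ ℓ else 0)]
  have h1 : ∀ b, (if agr ℓ (min t ℓ) ω b then (2:ℝ) ^ (min t ℓ) / 2 ^ ℓ else 0)
      = (if agr ℓ (min t ℓ) b ω then (2:ℝ) ^ (min t ℓ) / 2 ^ ℓ else 0) := by
    intro b; simp [agr_comm]
  rw [Finset.sum_congr rfl (fun b _ => h1 b),
    sum_ite_agr ℓ (min t ℓ) (min_le_right t ℓ) ω, pow_cancel (min_le_right t ℓ)]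

lemma mart_zero (ℓ : ℕ) (ω : Fin ℓ → Bool) :
    mart ℓ 0 ω = fun _ => ((2 : ℝ) ^ ℓ)⁻¹ := by
  funext x
  unfold mart
  have h : agr ℓ (min 0 ℓ) ω ((eqv ℓ).symm x) := by
    intro i hi; simp at hi
  rw [if_pos h]
  simp

lemma mart_meas (ℓ t : ℕ) (x : Fin (2 ^ ℓ)) :
    StronglyMeasurable[filt ℓ t] (fun ω => mart ℓ t ω x) := by
  have h : (fun ω => mart ℓ t ω x) = fun ω => mart ℓ t (trunc ℓ t ω) x := by
    funext ω
    unfold mart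
    simp only [agr_trunc ℓ (min t ℓ) t (min_le_left t ℓ)]
  rw [h]
  exact (measurable_filt (fun ω' => mart ℓ t ω' x)).stronglyMeasurable

lemma mart_setIntegral (ℓ : ℕ) (i j : ℕ) (hij : i ≤ j) (x : Fin (2 ^ ℓ))
    (s : Set (Fin ℓ → Bool)) (hs : MeasurableSet[filt ℓ i] s) :
    ∫ ω in s, mart ℓ i ω x ∂(meas ℓ) = ∫ ω in s, mart ℓ j ω x ∂(meas ℓ) := by
  classical
  obtain ⟨u, -, rfl⟩ := hs
  rw [setIntegral_meas, setIntegral_meas]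
  rw [← Finset.mul_sum, ← Finset.mul_sum]
  congr 1
  have hind : ∀ (t : ℕ) (ω : Fin ℓ → Bool),
      (trunc ℓ i ⁻¹' u).indicator (fun ω' => mart ℓ t ω' x) ω
        = u.indicator (fun _ => (1:ℝ)) (trunc ℓ i ω) * mart ℓ t ω x := by
    intro t ω
    by_cases h : trunc ℓ i ω ∈ u
    · simp [Set.indicator_of_mem, h, Set.mem_preimage]
    · simp [Set.indicator_of_notMem, h, Set.mem_preimage]
  rw [Finset.sum_congr rfl (fun ω _ => hind i ω),
    Finset.sum_congr rfl (fun ω _ => hind j ω)]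
  by_cases hi : ℓ ≤ i
  · have : min i ℓ = min j ℓ := by omega
    unfold mart
    rw [this]
  · push_neg at hi
    have hmin_i : min i ℓ = i := by omega
    set g : (Fin ℓ → Bool) → ℝ := u.indicator (fun _ => (1:ℝ)) with hg
    set b : Fin ℓ → Bool := (eqv ℓ).symm x with hb
    unfold mart
    rw [sum_trunc_agr ℓ i (min j ℓ) (by omega) (min_le_right j ℓ) g b,
      hmin_i]
    rw [sum_trunc_agr ℓ i i le_rfl (by omega) g b]
    rw [pow_cancel (min_le_right j ℓ), pow_cancel (le_of_lt hi)]

lemma mart_martingale (ℓ : ℕ) (x : Fin (2 ^ ℓ)) :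
    Martingale (fun t ω => mart ℓ t ω x) (filt ℓ) (meas ℓ) := by
  constructor
  · exact fun t => mart_meas ℓ t x
  · intro i j hij
    haveI : SigmaFinite ((meas ℓ).trim ((filt ℓ).le i)) := by
      haveI : IsFiniteMeasure ((meas ℓ).trim ((filt ℓ).le i)) :=
        isFiniteMeasure_trim _
      infer_instance
    refine (ae_eq_condExp_of_forall_setIntegral_eq ((filt ℓ).le i)
      (Integrable.of_finite)
      (fun s _ _ => Integrable.integrableOn Integrable.of_finite)
      (fun s hs _ => mart_setIntegral ℓ i j hij x s hs)
      (StronglyMeasurable.aestronglyMeasurable (mart_meas ℓ i x))).symm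

lemma mart_diff (ℓ t : ℕ) (ht1 : 1 ≤ t) (htℓ : t ≤ ℓ) (ω : Fin ℓ → Bool) :
    ∑ x, |mart ℓ t ω x - mart ℓ (t - 1) ω x| = 1 := by
  classical
  have hmin_t : min t ℓ = t := by omega
  have hmin_t1 : min (t - 1) ℓ = t - 1 := by omega
  have hpow : (2 : ℝ) ^ t = 2 ^ (t - 1) * 2 := by
    rw [← pow_succ]; congr 1; omega
  have key : ∀ x, |mart ℓ t ω x - mart ℓ (t - 1) ω x|
      = if agr ℓ (t - 1) ω ((eqv ℓ).symm x) then (2:ℝ) ^ (t - 1) / 2 ^ ℓ else 0 := by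
    intro x
    unfold mart
    rw [hmin_t, hmin_t1]
    by_cases h1 : agr ℓ t ω ((eqv ℓ).symm x)
    · have h2 : agr ℓ (t - 1) ω ((eqv ℓ).symm x) := agr_mono (by omega) h1
      rw [if_pos h1, if_pos h2, hpow]
      have e : (2:ℝ) ^ (t-1) * 2 / 2 ^ ℓ - 2 ^ (t-1) / 2 ^ ℓ = 2 ^ (t-1) / 2 ^ ℓ := by
        ring
      rw [e]
      exact abs_of_nonneg (by positivity)
    · by_cases h2 : agr ℓ (t - 1) ω ((eqv ℓ).symm x)
      · rw [if_neg h1, if_pos h2, zero_sub, abs_neg]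
        exact abs_of_nonneg (by positivity)
      · rw [if_neg h1, if_neg h2]
        simp
  rw [Finset.sum_congr rfl (fun x _ => key x)]
  rw [Equiv.sum_comp (eqv ℓ).symm
    (fun b => if agr ℓ (t - 1) ω b then (2:ℝ) ^ (t - 1) / 2 ^ ℓ else 0)]
  have h1 : ∀ b, (if agr ℓ (t - 1) ω b then (2:ℝ) ^ (t - 1) / 2 ^ ℓ else 0)
      = (if agr ℓ (t - 1) b ω then (2:ℝ) ^ (t - 1) / 2 ^ ℓ else 0) := by
    intro b; simp [agr_comm]
  rw [Finset.sum_congr rfl (fun b _ => h1 b),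
    sum_ite_agr ℓ (t - 1) (by omega) ω, pow_cancel (show t - 1 ≤ ℓ by omega)]

end Stmt17Aux

open Stmt17Aux

/-- For every positive integer `ℓ` there exists an `ℓ`-step martingale of probability
vectors on a set with `2 ^ ℓ` elements, starting at the uniform distribution, whose
one-step `ℓ₁` variation equals `1` almost surely at each step, so that the expected
total variation equals `ℓ`. -/
theorem stmt17 (ℓ : ℕ) (hℓ : 0 < ℓ) :
    ∃ (Ω : Type) (m : MeasurableSpace Ω) (μ : Measure Ω)
      (_ : IsProbabilityMeasure μ) (ℱ : Filtration ℕ m)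
      (f : ℕ → Ω → Fin (2 ^ ℓ) → ℝ),
      (∀ t ω x, 0 ≤ f t ω x) ∧ (∀ t ω, ∑ x, f t ω x = 1) ∧
      (∀ ω, f 0 ω = fun _ => ((2 : ℝ) ^ ℓ)⁻¹) ∧
      (∀ x, Martingale (fun t ω => f t ω x) ℱ μ) ∧
      (∀ t ∈ Finset.Icc 1 ℓ, ∀ᵐ ω ∂μ, ∑ x, |f t ω x - f (t - 1) ω x| = 1) ∧
      ∑ t ∈ Finset.Icc 1 ℓ, ∫ ω, ∑ x, |f t ω x - f (t - 1) ω x| ∂μ = ℓ := by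
  classical
  refine ⟨Fin ℓ → Bool, inferInstance, meas ℓ, inferInstance, filt ℓ,
    fun t ω x => mart ℓ t ω x, ?_, ?_, ?_, ?_, ?_, ?_⟩
  · exact fun t ω x => mart_nonneg ℓ t ω x
  · exact fun t ω => mart_sum ℓ t ω
  · exact fun ω => mart_zero ℓ ω
  · exact fun x => mart_martingale ℓ x
  · intro t ht
    simp only [Finset.mem_Icc] at ht
    exact Filter.Eventually.of_forall (fun ω => mart_diff ℓ t ht.1 ht.2 ω)
  · have h1 : ∀ t ∈ Finset.Icc 1 ℓ,
        ∫ ω, ∑ x, |mart ℓ t ω x - mart ℓ (t - 1) ω x| ∂(meas ℓ) = 1 := by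
      intro t ht
      simp only [Finset.mem_Icc] at ht
      have h2 : (fun ω => ∑ x, |mart ℓ t ω x - mart ℓ (t - 1) ω x|)
          = fun _ => (1 : ℝ) := funext (fun ω => mart_diff ℓ t ht.1 ht.2 ω)
      rw [h2, integral_const]
      simp
    rw [Finset.sum_congr rfl h1, Finset.sum_const, Nat.card_Icc]
    simp
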